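/- Identify T*gl(n,ℝ) with pairs (A,B) of n×n real matrices and let {·,·}_0 be the canonical Poisson bracket defined via matrix gradients. For k ≥ 1 set J_k(A,B) = trace(A^{k−1}·B). Then for all k,ℓ ≥ 1 with k+ℓ ≥ 3 and all (A,B): {J_k, J_ℓ}_0(A,B) = (ℓ−k)·J_{k+ℓ−2}(A,B), where the right-hand side means the (ℓ−k)-fold integer multiple of J_{k+ℓ−2}(A,B). -/

import Mathlib

open Matrix

attribute [local instance] Matrix.normedAddCommGroup Matrix.normedSpace

variable {n : ℕ}

/-- The continuous linear functional `(Ȧ, Ḃ) ↦ trace(GA·Ȧ) + trace(GB·Ḃ)` on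
`T*gl(n,ℝ) = gl(n,ℝ) × gl(n,ℝ)`. -/
noncomputable def tracePairing (GA GB : Matrix (Fin n) (Fin n) ℝ) :
    Matrix (Fin n) (Fin n) ℝ × Matrix (Fin n) (Fin n) ℝ →L[ℝ] ℝ :=
  LinearMap.toContinuousLinearMap
    { toFun := fun P => (GA * P.1).trace + (GB * P.2).trace
      map_add' := by
        intro P Q
        simp [Matrix.mul_add, Matrix.trace_add]
        ring
      map_smul' := by
        intro c P
        simp [Matrix.mul_smul, Matrix.trace_smul]
        ring }

/-- `F` has matrix gradients `(GA, GB)` at `(A,B)`: the Fréchet derivative of `F`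
at `(A,B)` is `(Ȧ, Ḃ) ↦ trace(GA·Ȧ) + trace(GB·Ḃ)`. -/
def HasMatrixGradAt (F : Matrix (Fin n) (Fin n) ℝ × Matrix (Fin n) (Fin n) ℝ → ℝ)
    (P : Matrix (Fin n) (Fin n) ℝ × Matrix (Fin n) (Fin n) ℝ)
    (GA GB : Matrix (Fin n) (Fin n) ℝ) : Prop :=
  HasFDerivAt F (tracePairing GA GB) P

/-- `I_k(A,B) = (1/k)·trace(Aᵏ)`. -/
noncomputable def Ifun (n k : ℕ) (P : Matrix (Fin n) (Fin n) ℝ × Matrix (Fin n) (Fin n) ℝ) : ℝ :=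
  (1 / (k : ℝ)) * (P.1 ^ k).trace

/-- `J_k(A,B) = trace(A^{k-1}·B)`. -/
noncomputable def Jfun (n k : ℕ) (P : Matrix (Fin n) (Fin n) ℝ × Matrix (Fin n) (Fin n) ℝ) : ℝ :=
  (P.1 ^ (k - 1) * P.2).trace

/-- Canonical Poisson bracket of the invariants `J_k` on `T*gl(n,ℝ)`:
`{J_k, J_ℓ}₀ = (ℓ−k)·J_{k+ℓ−2}` for `k+ℓ ≥ 3`, where
`{F,G}₀ = trace(∇_B F·∇_A G) − trace(∇_A F·∇_B G)`. -/
local notation "M" => Matrix (Fin n) (Fin n) ℝ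

lemma trace_mul_stdBasis (G : M) (i j : Fin n) :
    (G * Matrix.single i j (1:ℝ)).trace = G j i := by
  simp only [Matrix.trace, Matrix.diag, Matrix.mul_apply, Matrix.single, Matrix.of_apply,
    mul_ite, mul_one, mul_zero]
  rw [Finset.sum_comm]
  rw [Finset.sum_eq_single i, Finset.sum_eq_single j] <;> simp +contextual [eq_comm]

noncomputable def lrCLM (C D : M) : M →L[ℝ] M :=
  LinearMap.toContinuousLinearMap ((LinearMap.mulRight ℝ D).comp (LinearMap.mulLeft ℝ C))

@[simp] lemma lrCLM_apply (C D X : M) : lrCLM C D X = C * X * D := rfl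

noncomputable def mulL : M →ₗ[ℝ] M →L[ℝ] M where
  toFun X := LinearMap.toContinuousLinearMap (LinearMap.mulLeft ℝ X)
  map_add' X Y := by ext Z; simp [add_mul]
  map_smul' c X := by ext Z; simp [smul_mul_assoc]

noncomputable def mulCLM : M →L[ℝ] M →L[ℝ] M := LinearMap.toContinuousLinearMap mulL

lemma isBBM_mul : IsBoundedBilinearMap ℝ (fun p : M × M => p.1 * p.2) := by
  have h := (mulCLM (n := n)).isBoundedBilinearMap
  have : (fun p : M × M => mulCLM p.1 p.2) = fun p : M × M => p.1 * p.2 := by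
    funext p; simp [mulCLM, mulL]
  rw [← this]; exact h

lemma hasFDerivAt_pow_mat (m : ℕ) (A : M) :
    HasFDerivAt (fun X : M => X ^ m)
      (∑ i ∈ Finset.range m, lrCLM (A ^ i) (A ^ (m - 1 - i))) A := by
  induction m with
  | zero => simpa using hasFDerivAt_const (1 : M) A
  | succ m ih =>
    have h1 : HasFDerivAt (fun X : M => (X ^ m, X))
        ((∑ i ∈ Finset.range m, lrCLM (A ^ i) (A ^ (m - 1 - i))).prod
          (ContinuousLinearMap.id ℝ M)) A := ih.prodMk (hasFDerivAt_id A)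
    have h2 : HasFDerivAt (fun X : M => X ^ m * X)
        ((isBBM_mul.deriv (A ^ m, A)).comp
          ((∑ i ∈ Finset.range m, lrCLM (A ^ i) (A ^ (m - 1 - i))).prod
            (ContinuousLinearMap.id ℝ M))) A :=
      HasFDerivAt.comp (f := fun X : M => (X ^ m, X))
        (g := fun p : M × M => p.1 * p.2) A (isBBM_mul.hasFDerivAt (A ^ m, A)) h1
    have h3 : (fun X : M => X ^ m * X) = fun X : M => X ^ (m + 1) := by
      funext X; simp [pow_succ]
    rw [h3] at h2
    refine h2.congr_fderiv (Eq.symm ?_)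
    ext q : 1
    show (∑ i ∈ Finset.range (m + 1), lrCLM (A ^ i) (A ^ (m + 1 - 1 - i))) q
      = A ^ m * q + (∑ i ∈ Finset.range m, lrCLM (A ^ i) (A ^ (m - 1 - i))) q * A
    simp only [ContinuousLinearMap.coe_comp', Function.comp_apply,
      IsBoundedBilinearMap.deriv_apply, ContinuousLinearMap.prod_apply,
      ContinuousLinearMap.coe_sum', Finset.sum_apply, lrCLM_apply,
      ContinuousLinearMap.coe_id', id_eq]
    rw [Finset.sum_range_succ]
    simp only [Nat.sub_self, pow_zero, mul_one, Nat.add_sub_cancel]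
    rw [Finset.sum_mul, add_comm]
    congr 1
    apply Finset.sum_congr rfl
    intro i hi
    rw [mul_assoc (A ^ i * q), ← pow_succ]
    congr 2
    simp only [Finset.mem_range] at hi
    omega


@[simp] lemma tracePairing_apply (GA GB : M) (P : M × M) :
    tracePairing GA GB P = (GA * P.1).trace + (GB * P.2).trace := rfl

lemma tracePairing_inj {GA GB GA' GB' : M}
    (h : tracePairing GA GB = tracePairing GA' GB') : GA = GA' ∧ GB = GB' := by
  constructor
  · ext i j
    have := DFunLike.congr_fun h (Matrix.single j i (1:ℝ), 0)
    simpa [trace_mul_stdBasis] using this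
  · ext i j
    have := DFunLike.congr_fun h ((0 : M), Matrix.single j i (1:ℝ))
    simpa [trace_mul_stdBasis] using this

noncomputable def traceCLM : M →L[ℝ] ℝ :=
  LinearMap.toContinuousLinearMap (Matrix.traceLinearMap (Fin n) ℝ ℝ)

set_option maxHeartbeats 1000000 in
lemma key (m : ℕ) (A B : M) :
    HasFDerivAt (fun P : M × M => (P.1 ^ m * P.2).trace)
      (tracePairing (∑ i ∈ Finset.range m, A ^ (m - 1 - i) * B * A ^ i) (A ^ m)) (A, B) := by
  have D1 : M × M →L[ℝ] M :=
    (∑ i ∈ Finset.range m, lrCLM (A ^ i) (A ^ (m - 1 - i))).comp (ContinuousLinearMap.fst ℝ M M)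
  have hpow : HasFDerivAt (fun P : M × M => P.1 ^ m)
      ((∑ i ∈ Finset.range m, lrCLM (A ^ i) (A ^ (m - 1 - i))).comp
        (ContinuousLinearMap.fst ℝ M M)) (A, B) :=
    HasFDerivAt.comp (A, B) (hasFDerivAt_pow_mat m A) hasFDerivAt_fst
  have h1 := hpow.prodMk hasFDerivAt_snd
  have h2 : HasFDerivAt (fun P : M × M => P.1 ^ m * P.2)
      ((isBBM_mul.deriv (A ^ m, B)).comp
        ((((∑ i ∈ Finset.range m, lrCLM (A ^ i) (A ^ (m - 1 - i))).comp
          (ContinuousLinearMap.fst ℝ M M)).prod (ContinuousLinearMap.snd ℝ M M)))) (A, B) :=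
    HasFDerivAt.comp (f := fun P : M × M => (P.1 ^ m, P.2))
      (g := fun p : M × M => p.1 * p.2) (A, B) (isBBM_mul.hasFDerivAt (A ^ m, B)) h1
  have h3 := (traceCLM.hasFDerivAt (x := A ^ m * B)).comp (A, B) h2
  refine h3.congr_fderiv (Eq.symm ?_)
  refine ContinuousLinearMap.ext fun q => ?_
  show tracePairing (∑ i ∈ Finset.range m, A ^ (m - 1 - i) * B * A ^ i) (A ^ m) q
    = traceCLM (A ^ m * q.2 + (∑ i ∈ Finset.range m, lrCLM (A ^ i) (A ^ (m - 1 - i))) q.1 * B)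
  simp only [tracePairing_apply, ContinuousLinearMap.coe_comp', Function.comp_apply,
    IsBoundedBilinearMap.deriv_apply, ContinuousLinearMap.prod_apply,
    ContinuousLinearMap.coe_sum', Finset.sum_apply, lrCLM_apply,
    ContinuousLinearMap.coe_fst', ContinuousLinearMap.coe_snd']
  have htr : traceCLM (A ^ m * q.2 + (∑ i ∈ Finset.range m, A ^ i * q.1 * A ^ (m - 1 - i)) * B)
      = (A ^ m * q.2).trace + ∑ i ∈ Finset.range m,
          (A ^ i * q.1 * A ^ (m - 1 - i) * B).trace := by
    simp [traceCLM, Finset.sum_mul, Matrix.trace_sum]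
  rw [htr, add_comm]
  congr 1
  rw [Matrix.sum_mul, Matrix.trace_sum]
  apply Finset.sum_congr rfl
  intro i _
  calc (A ^ (m - 1 - i) * B * A ^ i * q.1).trace
      = ((A ^ (m - 1 - i) * B) * (A ^ i * q.1)).trace := by rw [mul_assoc]
    _ = ((A ^ i * q.1) * (A ^ (m - 1 - i) * B)).trace := Matrix.trace_mul_comm _ _
    _ = (A ^ i * q.1 * A ^ (m - 1 - i) * B).trace := by rw [← mul_assoc]

theorem canonical_brackets_JJ (hn : 1 ≤ n) (k ℓ : ℕ) (hk : 1 ≤ k) (hl : 1 ≤ ℓ)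
    (hkl : 3 ≤ k + ℓ) (A B JkA JkB JlA JlB : Matrix (Fin n) (Fin n) ℝ)
    (hJk : HasMatrixGradAt (Jfun n k) (A, B) JkA JkB)
    (hJl : HasMatrixGradAt (Jfun n ℓ) (A, B) JlA JlB) :
    (JkB * JlA).trace - (JkA * JlB).trace
      = ((ℓ : ℤ) - (k : ℤ)) • Jfun n (k + ℓ - 2) (A, B) := by
  obtain ⟨k', rfl⟩ : ∃ k', k = k' + 1 := ⟨k - 1, by omega⟩
  obtain ⟨l', rfl⟩ : ∃ l', ℓ = l' + 1 := ⟨ℓ - 1, by omega⟩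
  have ek : tracePairing JkA JkB
      = tracePairing (∑ i ∈ Finset.range k', A ^ (k' - 1 - i) * B * A ^ i) (A ^ k') :=
    HasFDerivAt.unique hJk (key k' A B)
  have el : tracePairing JlA JlB
      = tracePairing (∑ i ∈ Finset.range l', A ^ (l' - 1 - i) * B * A ^ i) (A ^ l') :=
    HasFDerivAt.unique hJl (key l' A B)
  obtain ⟨hkA, hkB⟩ := tracePairing_inj ek
  obtain ⟨hlA, hlB⟩ := tracePairing_inj el
  subst hkA hkB hlA hlB
  have cyc : ∀ a b : ℕ, (A ^ a * B * A ^ b).trace = (A ^ (a + b) * B).trace := by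
    intro a b
    calc (A ^ a * B * A ^ b).trace
        = (A ^ b * (A ^ a * B)).trace := Matrix.trace_mul_comm _ _
      _ = (A ^ (a + b) * B).trace := by
          rw [← mul_assoc, ← pow_add, Nat.add_comm b a]
  have t1 : ∀ j ∈ Finset.range l',
      (A ^ k' * (A ^ (l' - 1 - j) * B * A ^ j)).trace = (A ^ (k' + l' - 1) * B).trace := by
    intro j hj
    simp only [Finset.mem_range] at hj
    rw [← mul_assoc, ← mul_assoc, ← pow_add, cyc]
    have h : k' + (l' - 1 - j) + j = k' + l' - 1 := by omega
    rw [h]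
  have t2 : ∀ i ∈ Finset.range k',
      (A ^ (k' - 1 - i) * B * A ^ i * A ^ l').trace = (A ^ (k' + l' - 1) * B).trace := by
    intro i hi
    simp only [Finset.mem_range] at hi
    rw [mul_assoc (A ^ (k' - 1 - i) * B) (A ^ i) (A ^ l'), ← pow_add, cyc]
    have h : k' - 1 - i + (i + l') = k' + l' - 1 := by omega
    rw [h]
  rw [Finset.mul_sum, Finset.sum_mul, Matrix.trace_sum, Matrix.trace_sum,
    Finset.sum_congr rfl t1, Finset.sum_congr rfl t2, Finset.sum_const, Finset.sum_const,
    Finset.card_range, Finset.card_range]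
  have hJ : Jfun n (k' + 1 + (l' + 1) - 2) (A, B) = (A ^ (k' + l' - 1) * B).trace := by
    have h1 : k' + 1 + (l' + 1) - 2 - 1 = k' + l' - 1 := by omega
    simp [Jfun, h1]
  rw [hJ]
  simp only [nsmul_eq_mul, zsmul_eq_mul]
  push_cast
  ring
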